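/- Let p be a random variable satisfying P(p ≤ α) ≤ α for all α ∈ [0,1] (a valid p-value), and let F(u) = P(p* ≤ u) where p* is a random variable stochastically dominated by p. Then for any α ∈ (0,1), P(F(p) ≤ α) ≤ α. In particular, if F is the c.d.f. of inf_{x∈X} p(x) under the null and p₀ = inf_{x∈J₀} p(x) with J₀ ⊆ X, then P(F(p₀) ≤ α) ≤ α under the null. -/

import Mathlib

open MeasureTheory ProbabilityTheory Set

/-- **Plugging a p-value into the c.d.f. of a stochastically smaller variable is again a
p-value.**  Let `p` be a valid p-value (`P(p ≤ α) ≤ α` for all `α ∈ [0,1]`) and let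
`F(u) = P(p* ≤ u)` be the c.d.f. of a random variable `p*` stochastically dominated by `p`
(i.e. `P(p ≤ u) ≤ P(p* ≤ u)` for all `u`).  Then for any `α ∈ (0,1)`, `P(F(p) ≤ α) ≤ α`.
(In the application, `F` is the full-null c.d.f. of `inf_{x ∈ X} p(x)` and
`p = inf_{x ∈ J₀} p(x)` with `J₀ ⊆ X`.) -/
theorem cdf_of_dominated_pvalue_is_pvalue
    {Ω : Type*} [MeasurableSpace Ω] (μ : Measure Ω) [IsProbabilityMeasure μ]
    (p pstar : Ω → ℝ) (hp : Measurable p) (hpstar : Measurable pstar)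
    (hvalid : ∀ α : ℝ, α ∈ Icc (0:ℝ) 1 → μ {ω | p ω ≤ α} ≤ ENNReal.ofReal α)
    (hdom : ∀ u : ℝ, μ {ω | p ω ≤ u} ≤ μ {ω | pstar ω ≤ u})
    (F : ℝ → ℝ) (hF : ∀ u, F u = (μ {ω | pstar ω ≤ u}).toReal) :
    ∀ α : ℝ, α ∈ Ioo (0:ℝ) 1 → μ {ω | F (p ω) ≤ α} ≤ ENNReal.ofReal α := by
  intro α hα
  obtain ⟨hα0, hα1⟩ := hα
  set S : Set ℝ := {u | F u ≤ α} with hSdef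
  have hFmono : Monotone F := by
    intro a b hab
    rw [hF, hF]
    exact ENNReal.toReal_mono (measure_ne_top μ _)
      (measure_mono (fun ω hω => le_trans hω hab))
  have hkey : ∀ u ∈ S, μ {ω | p ω ≤ u} ≤ ENNReal.ofReal α := by
    intro u hu
    calc μ {ω | p ω ≤ u} ≤ μ {ω | pstar ω ≤ u} := hdom u
      _ = ENNReal.ofReal (F u) := by
          rw [hF, ENNReal.ofReal_toReal (measure_ne_top μ _)]
      _ ≤ ENNReal.ofReal α := ENNReal.ofReal_le_ofReal hu
  by_cases hSne : S.Nonempty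
  · have hbdd : BddAbove S := by
      by_contra hb
      have hall : ∀ u : ℝ, F u ≤ α := by
        intro u
        rcases not_bddAbove_iff.1 hb u with ⟨s, hsS, hus⟩
        exact le_trans (hFmono hus.le) hsS
      have hmonoSets : Monotone (fun n : ℕ => {ω | pstar ω ≤ (n : ℝ)} : ℕ → Set Ω) := by
        intro a b hab ω hω
        simp only [mem_setOf_eq] at hω ⊢
        exact le_trans hω (Nat.cast_le.2 hab)
      have hU : (⋃ n : ℕ, {ω | pstar ω ≤ (n : ℝ)}) = univ := by
        ext ω
        simp only [mem_iUnion, mem_univ, iff_true, mem_setOf_eq]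
        exact exists_nat_ge (pstar ω)
      have heq := Directed.measure_iUnion (μ := μ)
        (s := fun n : ℕ => {ω | pstar ω ≤ (n : ℝ)}) hmonoSets.directed_le
      rw [hU, measure_univ] at heq
      have hle : (1 : ENNReal) ≤ ENNReal.ofReal α := by
        rw [heq]
        refine iSup_le fun n => ?_
        calc μ {ω | pstar ω ≤ (n : ℝ)} = ENNReal.ofReal (F n) := by
              rw [hF, ENNReal.ofReal_toReal (measure_ne_top μ _)]
          _ ≤ ENNReal.ofReal α := ENNReal.ofReal_le_ofReal (hall n)
      exact absurd hle (not_le.2 (ENNReal.ofReal_lt_one.2 hα1))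
    set u0 : ℝ := sSup S with hu0
    have hltS : ∀ u : ℝ, u < u0 → u ∈ S := by
      intro u hu
      obtain ⟨s, hsS, hus⟩ := exists_lt_of_lt_csSup hSne hu
      exact le_trans (hFmono hus.le) hsS
    by_cases hFu0 : F u0 ≤ α
    · have hsub : {ω | F (p ω) ≤ α} ⊆ {ω | p ω ≤ u0} := by
        intro ω hω
        exact le_csSup hbdd hω
      exact le_trans (measure_mono hsub) (hkey u0 hFu0)
    · have hsub : {ω | F (p ω) ≤ α} ⊆ ⋃ n : ℕ, {ω | p ω ≤ u0 - 1 / (n + 1)} := by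
        intro ω hω
        have hmem : p ω ∈ S := hω
        have hle : p ω ≤ u0 := le_csSup hbdd hmem
        have hlt : p ω < u0 := by
          rcases lt_or_eq_of_le hle with h | h
          · exact h
          · exact absurd (h ▸ hmem) hFu0
        obtain ⟨n, hn⟩ := exists_nat_one_div_lt (sub_pos.2 hlt)
        exact mem_iUnion.2 ⟨n, by simp only [mem_setOf_eq]; linarith⟩
      have hmonoSets : Monotone (fun n : ℕ => {ω | p ω ≤ u0 - 1 / (n + 1)} : ℕ → Set Ω) := by
        intro a b hab ω hω
        have : (1 : ℝ) / (b + 1) ≤ 1 / (a + 1) := by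
          apply one_div_le_one_div_of_le
          · positivity
          · exact_mod_cast Nat.succ_le_succ hab
        simp only [mem_setOf_eq] at hω ⊢
        linarith
      calc μ {ω | F (p ω) ≤ α} ≤ μ (⋃ n : ℕ, {ω | p ω ≤ u0 - 1 / (n + 1)}) :=
            measure_mono hsub
        _ = ⨆ n : ℕ, μ {ω | p ω ≤ u0 - 1 / (n + 1)} :=
            Directed.measure_iUnion hmonoSets.directed_le
        _ ≤ ENNReal.ofReal α := by
            refine iSup_le fun n => hkey _ (hltS _ ?_)
            have : (0 : ℝ) < 1 / (n + 1) := by positivity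
            linarith
  · have hempty : {ω | F (p ω) ≤ α} = ∅ := by
      ext ω
      simp only [mem_setOf_eq, mem_empty_iff_false, iff_false]
      intro h
      exact hSne ⟨p ω, h⟩
    rw [hempty, measure_empty]
    exact zero_le
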